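/- Let q be a real number with 0 < q < 1 and let n be a nonnegative integer. Then the series [2]_q · ∑_{l=0}^∞ (−1)^l · q^l · [l]_q^n converges absolutely and equals the q-Euler number E*_{n,q} = [2]_q · (1/(1−q))^n · ∑_{j=0}^n C(n,j)·(−1)^j/(1 + q^{j+1}). -/

import Mathlib

open Filter Finset Topology

/-- for `0 < q < 1` and `n : ℕ`, the series `[2]_q·∑ (−1)^l q^l [l]_q^n`
converges absolutely and equals `E*_{n,q} = [2]_q·(1/(1−q))^n·∑_{j=0}^n C(n,j)(−1)^j/(1+q^{j+1})`. -/
theorem kim_qEuler_number (q : ℝ) (hq0 : 0 < q) (hq1 : q < 1) (n : ℕ) :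
    Summable (fun l : ℕ => |(-1:ℝ)^l * q^l * ((1 - q^l)/(1-q))^n|) ∧
    (1+q) * ∑' l : ℕ, (-1:ℝ)^l * q^l * ((1 - q^l)/(1-q))^n
      = (1+q) * (1/(1-q))^n *
          ∑ j ∈ Finset.range (n+1), (n.choose j : ℝ) * (-1)^j / (1 + q^(j+1)) := by
  have h1q : (0:ℝ) < 1 - q := by linarith
  have hnorm : ∀ j : ℕ, ‖(-(q^(j+1)) : ℝ)‖ < 1 := by
    intro j
    rw [norm_neg, Real.norm_eq_abs, abs_of_pos (pow_pos hq0 _)]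
    exact pow_lt_one₀ hq0.le hq1 (Nat.succ_ne_zero j)
  -- key termwise identity
  have key : ∀ l : ℕ, (-1:ℝ)^l * q^l * ((1 - q^l)/(1-q))^n
      = ∑ j ∈ Finset.range (n+1),
          ((n.choose j : ℝ) * (-1)^j * (1/(1-q))^n) * (-(q^(j+1)))^l := by
    intro l
    have hbin : ((-(q^l)) + 1 : ℝ)^n
        = ∑ j ∈ Finset.range (n+1), (-(q^l))^j * 1^(n-j) * (n.choose j : ℝ) :=
      add_pow _ _ _
    have h2 : (1 - q^l : ℝ)^n = ∑ j ∈ Finset.range (n+1), (-1:ℝ)^j * (q^l)^j * (n.choose j : ℝ) := by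
      rw [show (1 - q^l : ℝ) = (-(q^l)) + 1 by ring, hbin]
      refine Finset.sum_congr rfl fun j _ => ?_
      rw [neg_pow]; ring
    rw [div_pow, h2, Finset.sum_div, Finset.mul_sum]
    refine Finset.sum_congr rfl fun j _ => ?_
    have hp : ((-(q^(j+1)) : ℝ))^l = (-1:ℝ)^l * q^l * (q^l)^j := by
      rw [neg_pow, ← pow_mul, ← pow_mul, mul_assoc, ← pow_add]
      congr 2
      ring
    rw [hp]
    field_simp
    ring_nf
    rw [mul_assoc, ← mul_pow, inv_mul_cancel₀ h1q.ne', one_pow, mul_one]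
  -- summability
  have hsum : Summable (fun l : ℕ => |(-1:ℝ)^l * q^l * ((1 - q^l)/(1-q))^n|) := by
    refine Summable.of_nonneg_of_le (fun l => abs_nonneg _)
      (fun l => ?_) ((summable_geometric_of_lt_one hq0.le hq1).mul_left ((1/(1-q))^n))
    have hql : (0:ℝ) ≤ q^l := (pow_pos hq0 l).le
    have hql1 : q^l ≤ 1 := pow_le_one₀ hq0.le hq1.le
    have hx0 : (0:ℝ) ≤ (1 - q^l)/(1-q) := div_nonneg (by linarith) h1q.le
    have hx1 : (1 - q^l)/(1-q) ≤ 1/(1-q) := by gcongr; linarith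
    calc |(-1:ℝ)^l * q^l * ((1 - q^l)/(1-q))^n|
        = q^l * ((1 - q^l)/(1-q))^n := by
          rw [abs_mul, abs_mul, abs_pow, abs_neg, abs_one, one_pow, one_mul,
            abs_of_nonneg hql, abs_of_nonneg (pow_nonneg hx0 n)]
      _ ≤ q^l * (1/(1-q))^n := by gcongr
      _ = (1/(1-q))^n * q^l := by ring
  refine ⟨hsum, ?_⟩
  have hsg : ∀ j : ℕ, Summable (fun l : ℕ =>
      ((n.choose j : ℝ) * (-1)^j * (1/(1-q))^n) * (-(q^(j+1)))^l) :=
    fun j => (summable_geometric_of_norm_lt_one (hnorm j)).mul_left _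
  rw [tsum_congr key, Summable.tsum_finsetSum (fun j _ => hsg j)]
  rw [Finset.mul_sum, Finset.mul_sum]
  refine Finset.sum_congr rfl fun j _ => ?_
  rw [tsum_mul_left, tsum_geometric_of_norm_lt_one (hnorm j), sub_neg_eq_add]
  have hne : (1 + q^(j+1) : ℝ) ≠ 0 := by positivity
  field_simp
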